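/- Consider a pushout square in topological spaces with left vertical map A × Sⁿ⁻¹ → A × Dⁿ (identity on A times the boundary inclusion) and top map A × Sⁿ⁻¹ → Y; then the induced map Y → Z into the pushout is a relative T₁-inclusion of spaces: for every open U ⊆ Y and every point z ∈ Z not in the image of U, there is an open W ⊆ Z with image(U) ⊆ W and z ∉ W. -/

import Mathlib

open CategoryTheory

/-- Pushing out along `A × Sⁿ⁻¹ → A × Dⁿ` yields a relative `T₁`-inclusion `Y → Z`:
for every open `U ⊆ Y` and every `z ∈ Z` outside the image of `U`, there is an open
`W ⊆ Z` containing the image of `U` and avoiding `z`. -/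
theorem relT1_of_pushout_sphere_disk (n : ℕ) (A : Type) [TopologicalSpace A]
    {Y Z : TopCat.{0}}
    (top : TopCat.of (A × (Metric.sphere (0 : EuclideanSpace ℝ (Fin n)) 1 : Set _)) ⟶ Y)
    (bot : TopCat.of (A × (Metric.closedBall (0 : EuclideanSpace ℝ (Fin n)) 1 : Set _)) ⟶ Z)
    (f : Y ⟶ Z)
    (hpo : IsPushout
      (TopCat.ofHom (ContinuousMap.prodMap (ContinuousMap.id A)
        ⟨Set.inclusion Metric.sphere_subset_closedBall,
          continuous_inclusion Metric.sphere_subset_closedBall⟩ : C(_,_)))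
      top bot f) :
    ∀ U : Set Y, IsOpen U → ∀ z : Z, z ∉ f '' U →
      ∃ W : Set Z, IsOpen W ∧ f '' U ⊆ W ∧ z ∉ W := by
  intro U hU z hz
  -- the preimage of `U` on the sphere cylinder
  have hVopen : IsOpen (⇑top ⁻¹' U) := hU.preimage top.hom.continuous
  -- an open set `V'` of `A × E` cutting out `top ⁻¹' U`
  have hemb : Topology.IsEmbedding
      (fun p : A × (Metric.sphere (0 : EuclideanSpace ℝ (Fin n)) 1 : Set _) =>
        ((p.1, (p.2 : EuclideanSpace ℝ (Fin n))) : A × EuclideanSpace ℝ (Fin n))) :=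
    Topology.IsEmbedding.id.prodMap Topology.IsEmbedding.subtypeVal
  obtain ⟨V', hV'open, hV'⟩ := hemb.isInducing.isOpen_iff.mp hVopen
  -- the key construction: for each `0 < t < 1`, an open `W` whose preimage under `f`
  -- is exactly `U` and whose points coming from the disk cylinder have norm `> t`
  have key : ∀ t : ℝ, 0 < t → t < 1 →
      ∃ W : Set Z, IsOpen W ∧ (∀ y : ↑Y, f y ∈ W ↔ y ∈ U) ∧
        (∀ p : A × (Metric.closedBall (0 : EuclideanSpace ℝ (Fin n)) 1 : Set _),
          bot p ∈ W → t < ‖(p.2 : EuclideanSpace ℝ (Fin n))‖) := by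
    intro t ht0 ht1
    -- the radially stretched open set in `A × E`
    set O : Set (A × EuclideanSpace ℝ (Fin n)) :=
      {q | t < ‖q.2‖} ∩ (fun q : A × EuclideanSpace ℝ (Fin n) => (q.1, ‖q.2‖⁻¹ • q.2)) ⁻¹' V'
      with hO
    have hOs : IsOpen {q : A × EuclideanSpace ℝ (Fin n) | t < ‖q.2‖} :=
      isOpen_lt continuous_const (continuous_snd.norm)
    have hOopen : IsOpen O := by
      apply ContinuousOn.isOpen_inter_preimage ?_ hOs hV'open
      apply ContinuousOn.prodMk continuous_fst.continuousOn
      apply ContinuousOn.smul (f := fun x : A × EuclideanSpace ℝ (Fin n) => ‖x.2‖⁻¹) (g := Prod.snd) ?_ continuous_snd.continuousOn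
      apply ContinuousOn.inv₀ continuous_snd.norm.continuousOn
      intro q hq
      exact ne_of_gt (lt_trans ht0 hq)
    set V₁ : Set (A × (Metric.closedBall (0 : EuclideanSpace ℝ (Fin n)) 1 : Set _)) :=
      (fun p : A × (Metric.closedBall (0 : EuclideanSpace ℝ (Fin n)) 1 : Set _) =>
        ((p.1, (p.2 : EuclideanSpace ℝ (Fin n))) : A × EuclideanSpace ℝ (Fin n))) ⁻¹' O with hV₁
    have hV₁open : IsOpen V₁ :=
      hOopen.preimage (continuous_fst.prodMk (continuous_subtype_val.comp continuous_snd))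
    -- characteristic maps to Sierpiński space
    set χD : TopCat.of (A × (Metric.closedBall (0 : EuclideanSpace ℝ (Fin n)) 1 : Set _)) ⟶
        TopCat.of Prop :=
      TopCat.ofHom ⟨fun p => p ∈ V₁, isOpen_iff_continuous_mem.mp hV₁open⟩ with hχD
    set χY : Y ⟶ TopCat.of Prop := TopCat.ofHom ⟨fun y => y ∈ U, isOpen_iff_continuous_mem.mp hU⟩ with hχY
    have hw : TopCat.ofHom (ContinuousMap.prodMap (ContinuousMap.id A)
        ⟨Set.inclusion Metric.sphere_subset_closedBall,
          continuous_inclusion Metric.sphere_subset_closedBall⟩ : C(_,_)) ≫ χD = top ≫ χY := by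
      ext p
      refine Iff.of_eq ?_
      show ((p.1, Set.inclusion Metric.sphere_subset_closedBall p.2) ∈ V₁) = (top p ∈ U)
      have hnorm : ‖(p.2 : EuclideanSpace ℝ (Fin n))‖ = 1 :=
        mem_sphere_zero_iff_norm.mp p.2.2
      have hVmem : (p ∈ ⇑top ⁻¹' U) = (top p ∈ U) := rfl
      rw [← hVmem, ← hV']
      apply propext
      constructor
      · rintro ⟨-, hmem⟩
        simpa [hnorm] using hmem
      · intro hp
        exact ⟨by simpa [hnorm] using ht1, by simpa [hnorm] using hp⟩
    refine ⟨{w | (hpo.desc χD χY hw) w}, ?_, ?_, ?_⟩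
    · exact isOpen_iff_continuous_mem.mpr (hpo.desc χD χY hw).hom.continuous
    · intro y
      have h2 := ConcreteCategory.congr_hom (hpo.inr_desc χD χY hw) y
      simp only [comp_apply] at h2
      exact Eq.to_iff h2
    · intro p hp
      have h2 := ConcreteCategory.congr_hom (hpo.inl_desc χD χY hw) p
      simp only [comp_apply] at h2
      rw [Set.mem_setOf_eq, h2] at hp
      exact hp.1
  -- joint surjectivity: every point of `Z` comes from `Y` or from the open disk cylinder
  have hcase : (∃ y : ↑Y, f y = z) ∨
      (∃ p : A × (Metric.closedBall (0 : EuclideanSpace ℝ (Fin n)) 1 : Set _),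
        ‖(p.2 : EuclideanSpace ℝ (Fin n))‖ < 1 ∧ bot p = z) := by
    have hbotcase : ∀ p : A × (Metric.closedBall (0 : EuclideanSpace ℝ (Fin n)) 1 : Set _),
        bot p = z → (∃ y : ↑Y, f y = z) ∨
        (∃ p : A × (Metric.closedBall (0 : EuclideanSpace ℝ (Fin n)) 1 : Set _),
          ‖(p.2 : EuclideanSpace ℝ (Fin n))‖ < 1 ∧ bot p = z) := by
      intro p hp
      rcases lt_or_eq_of_le (mem_closedBall_zero_iff.mp p.2.2) with hlt | heq
      · exact Or.inr ⟨p, hlt, hp⟩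
      · left
        set q : A × (Metric.sphere (0 : EuclideanSpace ℝ (Fin n)) 1 : Set _) :=
          (p.1, ⟨(p.2 : EuclideanSpace ℝ (Fin n)), mem_sphere_zero_iff_norm.mpr heq⟩) with hq
        have hcomm := ConcreteCategory.congr_hom hpo.w q
        simp only [comp_apply] at hcomm
        refine ⟨top q, ?_⟩
        rw [← hcomm, ← hp]
        rfl
    have hpoT := hpo.map (forget TopCat)
    obtain ⟨j, y, hy⟩ := Limits.Types.jointly_surjective_of_isColimit hpoT.isColimit z
    cases j with
    | none =>
      simp only [IsPushout.cocone, CommSq.cocone, Limits.PushoutCocone.mk_ι_app,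
        Limits.PushoutCocone.condition_zero, types_comp_apply] at hy
      exact hbotcase _ hy
    | some j' =>
      cases j' with
      | left =>
        simp only [IsPushout.cocone, CommSq.cocone, Limits.PushoutCocone.mk_ι_app] at hy
        exact hbotcase y hy
      | right =>
        simp only [IsPushout.cocone, CommSq.cocone, Limits.PushoutCocone.mk_ι_app] at hy
        exact Or.inl ⟨y, hy⟩
  rcases hcase with ⟨y, rfl⟩ | ⟨p, hlt, rfl⟩
  · obtain ⟨W, hWopen, hWf, -⟩ := key (1/2) (by norm_num) (by norm_num)
    refine ⟨W, hWopen, ?_, ?_⟩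
    · rintro - ⟨u, hu, rfl⟩
      exact (hWf u).mpr hu
    · intro hyW
      exact hz ⟨y, (hWf y).mp hyW, rfl⟩
  · have hn0 : (0:ℝ) ≤ ‖(p.2 : EuclideanSpace ℝ (Fin n))‖ := norm_nonneg _
    obtain ⟨W, hWopen, hWf, hWbot⟩ := key ((1 + ‖(p.2 : EuclideanSpace ℝ (Fin n))‖) / 2)
      (by linarith) (by linarith)
    refine ⟨W, hWopen, ?_, ?_⟩
    · rintro - ⟨u, hu, rfl⟩
      exact (hWf u).mpr hu
    · intro hpW
      have := hWbot p hpW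
      linarith
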